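/- arXiv:0903.5084 — 2 statements merged into one kernel-verified Lean document; each statement's English description precedes it below -/
import Mathlib

section
/- Let N ≥ 0 be an integer, b_0 > 0 a real number, and k_1, …, k_N > 0 real numbers. Suppose F : [0,∞) → (0,∞) satisfies: F(0) = 1; log F is convex on [0,∞); and F(k+1) = b_0 · (∏_{i=1}^N (k + k_i)) · F(k) for all k ≥ 0. Then F(k) = b_0^k · ∏_{i=1}^N Γ(k + k_i)/Γ(k_i) for all k ≥ 0, where Γ is the real Gamma function. -/
open Finset

private lemma convexOn_finset_sum {ι : Type*} (t : Finset ι) {s : Set ℝ} (hs : Convex ℝ s)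
    {f : ι → ℝ → ℝ} (h : ∀ i ∈ t, ConvexOn ℝ s (f i)) :
    ConvexOn ℝ s (fun x => ∑ i ∈ t, f i x) := by
  classical
  induction t using Finset.induction with
  | empty => simpa using convexOn_const (0:ℝ) hs
  | insert _ _ hx ih =>
    simp only [Finset.sum_insert hx]
    exact (h _ (Finset.mem_insert_self _ _)).add
      (ih fun i hi => h i (Finset.mem_insert_of_mem hi))

private lemma bm_step (f c : ℝ → ℝ) (hfr : ∀ k : ℝ, 0 ≤ k → f (k + 1) = f k + c k)
    (x : ℝ) (hx : 0 ≤ x) : ∀ n : ℕ, f (x + n) = f x + ∑ j ∈ range n, c (x + j) := by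
  intro n
  induction n with
  | zero => simp
  | succ n ih =>
    have h1 : (0:ℝ) ≤ x + n := by positivity
    have h2 : f ((x + n) + 1) = f (x + n) + c (x + n) := hfr _ h1
    have h3 : x + (((n:ℕ)+1 : ℕ) : ℝ) = (x + n) + 1 := by push_cast; ring
    rw [h3, h2, ih, Finset.sum_range_succ]
    ring

private lemma bm_bound (f c : ℝ → ℝ) (hf0 : f 0 = 0)
    (hfc : ConvexOn ℝ (Set.Ici 0) f)
    (hfr : ∀ k : ℝ, 0 ≤ k → f (k + 1) = f k + c k)
    {x : ℝ} (hx0 : 0 < x) (hx1 : x < 1) (n : ℕ) :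
    x * c n - (∑ j ∈ range (n+1), (c (x + j) - c j)) ≤ f x ∧
    f x ≤ x * c ((n:ℝ) + 1) - (∑ j ∈ range (n+1), (c (x + j) - c j)) := by
  have hsum := bm_step f c hfr
  set a : ℝ := (n:ℝ)
  have ha : (0:ℝ) ≤ a := Nat.cast_nonneg n
  have hb : (0:ℝ) ≤ a + 1 := by positivity
  have hd : (0:ℝ) ≤ a + 1 + x := by positivity
  have he : (0:ℝ) ≤ a + 2 := by positivity
  -- values via recursion / sums
  have hfb : f (a + 1) - f a = c a := by have := hfr a ha; linarith
  have hfe : f (a + 2) - f (a + 1) = c (a + 1) := by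
    have := hfr (a + 1) hb
    have h2 : a + 1 + 1 = a + 2 := by ring
    rw [h2] at this; linarith
  have hfd : f (a + 1 + x) - f (a + 1) =
      f x + ∑ j ∈ range (n+1), (c (x + j) - c j) := by
    have h1 : f (x + ((n:ℕ)+1 : ℕ)) = f x + ∑ j ∈ range (n+1), c (x + j) :=
      hsum x hx0.le (n+1)
    have h2 : f ((0:ℝ) + ((n:ℕ)+1 : ℕ)) = f 0 + ∑ j ∈ range (n+1), c ((0:ℝ) + j) :=
      hsum 0 le_rfl (n+1)
    have e1 : x + (((n:ℕ)+1 : ℕ) : ℝ) = a + 1 + x := by push_cast; ring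
    have e2 : (0:ℝ) + (((n:ℕ)+1 : ℕ) : ℝ) = a + 1 := by push_cast; ring
    rw [e1] at h1
    rw [e2, hf0, zero_add] at h2
    rw [h1, h2, Finset.sum_sub_distrib]
    simp only [zero_add]
    ring
  -- slope inequalities
  have slope1 : (f (a + 1) - f a) / ((a + 1) - a) ≤
      (f (a + 1 + x) - f (a + 1)) / ((a + 1 + x) - (a + 1)) :=
    hfc.slope_mono_adjacent (Set.mem_Ici.2 ha) (Set.mem_Ici.2 hd)
      (by linarith) (by linarith)
  have slope2 : (f (a + 1 + x) - f (a + 1)) / ((a + 1 + x) - (a + 1)) ≤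
      (f (a + 2) - f (a + 1)) / ((a + 2) - (a + 1)) :=
    hfc.secant_mono_aux2 (Set.mem_Ici.2 hb) (Set.mem_Ici.2 he)
      (by linarith) (by linarith)
  have e3 : (a + 1) - a = 1 := by ring
  have e4 : (a + 1 + x) - (a + 1) = x := by ring
  have e5 : (a + 2) - (a + 1) = 1 := by ring
  rw [e3, e4, div_one] at slope1
  rw [e4, e5, div_one] at slope2
  rw [hfb] at slope1
  rw [hfe] at slope2
  rw [hfd] at slope1 slope2
  constructor
  · have h := (le_div_iff₀ hx0).mp slope1
    linarith
  · have h := (div_le_iff₀ hx0).mp slope2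
    linarith

private lemma bm_unique (c f g : ℝ → ℝ)
    (hf0 : f 0 = 0) (hg0 : g 0 = 0)
    (hfc : ConvexOn ℝ (Set.Ici 0) f) (hgc : ConvexOn ℝ (Set.Ici 0) g)
    (hfr : ∀ k : ℝ, 0 ≤ k → f (k + 1) = f k + c k)
    (hgr : ∀ k : ℝ, 0 ≤ k → g (k + 1) = g k + c k)
    (hlim : Filter.Tendsto (fun n : ℕ => c ((n:ℝ) + 1) - c (n:ℝ))
      Filter.atTop (nhds 0)) :
    ∀ k : ℝ, 0 ≤ k → f k = g k := by
  have key : ∀ x : ℝ, 0 < x → x < 1 → f x = g x := by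
    intro x hx0 hx1
    have hbnd : ∀ n : ℕ, |f x - g x| ≤ x * (c ((n:ℝ) + 1) - c (n:ℝ)) := by
      intro n
      obtain ⟨hf1, hf2⟩ := bm_bound f c hf0 hfc hfr hx0 hx1 n
      obtain ⟨hg1, hg2⟩ := bm_bound g c hg0 hgc hgr hx0 hx1 n
      rw [abs_le]
      constructor <;> nlinarith
    have hlim' : Filter.Tendsto (fun n : ℕ => x * (c ((n:ℝ) + 1) - c (n:ℝ)))
        Filter.atTop (nhds 0) := by
      simpa using hlim.const_mul x
    have : |f x - g x| ≤ 0 := ge_of_tendsto' hlim' hbnd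
    have := abs_nonpos_iff.mp this
    linarith [sub_eq_zero.mp this]
  have frac : ∀ x : ℝ, 0 ≤ x → x < 1 → f x = g x := by
    intro x hx0 hx1
    rcases eq_or_lt_of_le hx0 with h | h
    · rw [← h, hf0, hg0]
    · exact key x h hx1
  intro k hk
  set n : ℕ := ⌊k⌋₊ with hn
  set x : ℝ := k - n with hxdef
  have hx0 : 0 ≤ x := by
    have := Nat.floor_le hk
    simp only [hxdef]; linarith
  have hx1 : x < 1 := by
    have := Nat.lt_floor_add_one k
    simp only [hxdef]; linarith
  have hk' : k = x + n := by simp [hxdef]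
  rw [hk', bm_step f c hfr x hx0 n, bm_step g c hgr x hx0 n, frac x hx0 hx1]

/-- **A Bohr–Mollerup-type uniqueness principle.** If `F : [0,∞) → (0,∞)`
satisfies `F(0) = 1`, `log F` is convex on `[0,∞)`, and
`F(k+1) = b₀ ∏_i (k + k_i) F(k)` with `b₀ > 0` and all `k_i > 0`, then
`F(k) = b₀^k ∏_i Γ(k + k_i)/Γ(k_i)`. -/
theorem gamma_product_uniqueness
    (N : ℕ) (b₀ : ℝ) (hb₀ : 0 < b₀)
    (κ : Fin N → ℝ) (hκ : ∀ i, 0 < κ i)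
    (F : ℝ → ℝ)
    (hFpos : ∀ k : ℝ, 0 ≤ k → 0 < F k)
    (hF0 : F 0 = 1)
    (hconv : ConvexOn ℝ (Set.Ici (0 : ℝ)) (fun k => Real.log (F k)))
    (hrec : ∀ k : ℝ, 0 ≤ k → F (k + 1) = b₀ * (∏ i, (k + κ i)) * F k) :
    ∀ k : ℝ, 0 ≤ k →
      F k = b₀ ^ k * ∏ i, Real.Gamma (k + κ i) / Real.Gamma (κ i) := by
  set c : ℝ → ℝ := fun k => Real.log b₀ + ∑ i, Real.log (k + κ i) with hc
  set f : ℝ → ℝ := fun k => Real.log (F k) with hfdef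
  set g : ℝ → ℝ := fun k => k * Real.log b₀ +
      ∑ i, (Real.log (Real.Gamma (k + κ i)) - Real.log (Real.Gamma (κ i))) with hgdef
  have hpos : ∀ (k : ℝ), 0 ≤ k → ∀ i : Fin N, 0 < k + κ i := fun k hk i => by
    have := hκ i; linarith
  have hΓpos : ∀ (k : ℝ), 0 ≤ k → ∀ i : Fin N, 0 < Real.Gamma (k + κ i) :=
    fun k hk i => Real.Gamma_pos_of_pos (hpos k hk i)
  -- f properties
  have hf0 : f 0 = 0 := by simp [hfdef, hF0]
  have hfr : ∀ k : ℝ, 0 ≤ k → f (k + 1) = f k + c k := by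
    intro k hk
    have hprod : (0:ℝ) < ∏ i, (k + κ i) := Finset.prod_pos fun i _ => hpos k hk i
    simp only [hfdef, hc]
    rw [hrec k hk, Real.log_mul (by positivity) (hFpos k hk).ne',
      Real.log_mul hb₀.ne' hprod.ne',
      Real.log_prod (fun i _ => (hpos k hk i).ne')]
    ring
  -- g properties
  have hg0 : g 0 = 0 := by simp [hgdef]
  have hgc : ConvexOn ℝ (Set.Ici (0:ℝ)) g := by
    have h1 : ConvexOn ℝ (Set.Ici (0:ℝ)) (fun k : ℝ => k * Real.log b₀ +
        (- ∑ i, Real.log (Real.Gamma (κ i)))) := by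
      refine ⟨convex_Ici 0, fun x _ y _ a b _ _ hab => le_of_eq ?_⟩
      simp only [smul_eq_mul]
      linear_combination (∑ i, Real.log (Real.Gamma (κ i))) * hab
    have h2 : ∀ i : Fin N, ConvexOn ℝ (Set.Ici (0:ℝ))
        (fun k : ℝ => Real.log (Real.Gamma (k + κ i))) := by
      intro i
      refine ⟨convex_Ici 0, fun x hx y hy a b ha hb hab => ?_⟩
      have hx' : x + κ i ∈ Set.Ioi (0:ℝ) := hpos x hx i
      have hy' : y + κ i ∈ Set.Ioi (0:ℝ) := hpos y hy i
      have := Real.convexOn_log_Gamma.2 hx' hy' ha hb hab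
      simp only [Function.comp_apply, smul_eq_mul] at this ⊢
      have e : a * (x + κ i) + b * (y + κ i) = a * x + b * y + κ i := by
        linear_combination (κ i) * hab
      rw [e] at this
      exact this
    have := (h1.add (convexOn_finset_sum univ (convex_Ici 0)
      (fun i _ => h2 i)))
    refine cast (congrArg (ConvexOn ℝ (Set.Ici (0:ℝ))) ?_) this
    funext k
    simp only [hgdef, Pi.add_apply, Finset.sum_sub_distrib]
    ring
  have hgr : ∀ k : ℝ, 0 ≤ k → g (k + 1) = g k + c k := by
    intro k hk
    simp only [hgdef, hc]
    have hΓstep : ∀ i : Fin N,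
        Real.log (Real.Gamma (k + 1 + κ i)) =
          Real.log (k + κ i) + Real.log (Real.Gamma (k + κ i)) := by
      intro i
      have e : k + 1 + κ i = (k + κ i) + 1 := by ring
      rw [e, Real.Gamma_add_one (hpos k hk i).ne',
        Real.log_mul (hpos k hk i).ne' (hΓpos k hk i).ne']
    have : ∑ i, (Real.log (Real.Gamma (k + 1 + κ i)) - Real.log (Real.Gamma (κ i)))
        = ∑ i, ((Real.log (Real.Gamma (k + κ i)) - Real.log (Real.Gamma (κ i)))
            + Real.log (k + κ i)) := by
      refine Finset.sum_congr rfl fun i _ => ?_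
      rw [hΓstep i]; ring
    rw [this, Finset.sum_add_distrib]
    ring
  -- the limit of c(n+1) - c(n)
  have hlim : Filter.Tendsto (fun n : ℕ => c ((n:ℝ) + 1) - c (n:ℝ))
      Filter.atTop (nhds 0) := by
    have : ∀ n : ℕ, c ((n:ℝ) + 1) - c (n:ℝ) =
        ∑ i, (Real.log ((n:ℝ) + 1 + κ i) - Real.log ((n:ℝ) + κ i)) := by
      intro n
      simp only [hc, Finset.sum_sub_distrib]
      ring
    rw [funext this]
    have : (0:ℝ) = ∑ _i : Fin N, (0:ℝ) := by simp
    rw [this]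
    refine tendsto_finset_sum _ fun i _ => ?_
    have hterm : ∀ n : ℕ, Real.log ((n:ℝ) + 1 + κ i) - Real.log ((n:ℝ) + κ i)
        = Real.log (1 + 1 / ((n:ℝ) + κ i)) := by
      intro n
      have hki := hκ i
      have h1 : (0:ℝ) < (n:ℝ) + κ i := by positivity
      have h2 : (0:ℝ) < (n:ℝ) + 1 + κ i := by positivity
      rw [← Real.log_div h2.ne' h1.ne']
      congr 1
      field_simp
      ring
    rw [funext hterm]
    have h3 : Filter.Tendsto (fun n : ℕ => (n:ℝ) + κ i) Filter.atTop Filter.atTop :=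
      Filter.tendsto_atTop_add_const_right _ _ tendsto_natCast_atTop_atTop
    have h4 : Filter.Tendsto (fun n : ℕ => 1 / ((n:ℝ) + κ i)) Filter.atTop (nhds 0) := by
      simpa [Pi.inv_def] using h3.inv_tendsto_atTop
    have h5 : Filter.Tendsto (fun n : ℕ => 1 + 1 / ((n:ℝ) + κ i)) Filter.atTop (nhds 1) := by
      simpa using (tendsto_const_nhds.add h4 :
        Filter.Tendsto (fun n : ℕ => (1:ℝ) + 1 / ((n:ℝ) + κ i)) Filter.atTop (nhds (1 + 0)))
    have h6 : Filter.Tendsto Real.log (nhds (1:ℝ)) (nhds (Real.log 1)) :=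
      (Real.continuousAt_log one_ne_zero).tendsto
    rw [Real.log_one] at h6
    exact h6.comp h5
  have huniq := bm_unique c f g hf0 hg0 hconv hgc hfr hgr hlim
  intro k hk
  have hfk : F k = Real.exp (f k) := by
    simp only [hfdef]; rw [Real.exp_log (hFpos k hk)]
  rw [hfk, huniq k hk]
  simp only [hgdef]
  rw [Real.exp_add, Real.exp_sum]
  congr 1
  · rw [Real.rpow_def_of_pos hb₀]
    ring_nf
  · refine Finset.prod_congr rfl fun i _ => ?_
    rw [Real.exp_sub, Real.exp_log (hΓpos k hk i),
      Real.exp_log (Real.Gamma_pos_of_pos (hκ i))]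
end

section
/- As k → +∞ along the reals, log F(k)/(k·log k) tends to |S|; that is, the leading term of the asymptotics of log F(k) is |S|·k·log k. -/
open MeasureTheory Finset
open scoped RealInnerProductSpace

noncomputable section

/-- `V = ℝ^r` as a Euclidean space. -/
abbrev EucV (r : ℕ) := EuclideanSpace ℝ (Fin r)

/-- An orthogonal reflection: an orthogonal transformation fixing a hyperplane
pointwise and acting as `-1` on its orthogonal complement; equivalently, it is
given by the standard reflection formula for some root `a` with `(a,a) = 2`. -/
def IsReflection {r : ℕ} (w : EucV r ≃ₗᵢ[ℝ] EucV r) : Prop :=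
  ∃ a : EucV r, ⟪a, a⟫ = 2 ∧ ∀ v : EucV r, w v = v - ⟪a, v⟫ • a

/-- The discriminant polynomial `Δ(x) = ∏_{s ∈ S} (α_s, x)`. -/
def MMdelta {r : ℕ} (S : Finset (EucV r ≃ₗᵢ[ℝ] EucV r))
    (α : (EucV r ≃ₗᵢ[ℝ] EucV r) → EucV r) (x : EucV r) : ℝ :=
  ∏ s ∈ S, ⟪α s, x⟫

/-- The Macdonald–Mehta integral `F(k) = (2π)^{-r/2} ∫ e^{-(x,x)/2} |Δ(x)|^{2k} dx`
for real `k`. -/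
def MMF (r : ℕ) (S : Finset (EucV r ≃ₗᵢ[ℝ] EucV r))
    (α : (EucV r ≃ₗᵢ[ℝ] EucV r) → EucV r) (k : ℝ) : ℝ :=
  (2 * Real.pi) ^ (-(r : ℝ) / 2) *
    ∫ x : EucV r, Real.exp (-⟪x, x⟫ / 2) * |MMdelta S α x| ^ (2 * k)

/-- The submodule of `W`-invariant homogeneous polynomials of degree `n` on `ℝ^r`. -/
def invHomog (r : ℕ) (W : Subgroup (EucV r ≃ₗᵢ[ℝ] EucV r)) (n : ℕ) :
    Submodule ℝ (MvPolynomial (Fin r) ℝ) where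
  carrier := {p | p.IsHomogeneous n ∧ ∀ w ∈ W, ∀ x : EucV r,
    MvPolynomial.eval (fun i => (w x) i) p = MvPolynomial.eval (fun i => x i) p}
  add_mem' := by
    intro p q hp hq
    exact ⟨hp.1.add hq.1, fun w hw x => by simp [hp.2 w hw x, hq.2 w hw x]⟩
  zero_mem' := ⟨MvPolynomial.isHomogeneous_zero _ _ _, by simp⟩
  smul_mem' := by
    intro c p hp
    refine ⟨?_, fun w hw x => by simp [hp.2 w hw x]⟩
    rw [MvPolynomial.smul_eq_C_mul]
    simpa using (MvPolynomial.isHomogeneous_C _ c).mul hp.1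

/-- `d : Fin r → ℕ` is a sequence of degrees for the reflection group `W`:
each `d i` is positive and for every `n` the dimension of the space of
`W`-invariant homogeneous polynomials of degree `n` equals the coefficient of
`q^n` in `∏_i (1 - q^{d_i})⁻¹`, i.e. the number of `r`-tuples `(m_1,…,m_r)` of
nonnegative integers with `∑ d_i m_i = n`. -/
def HasDegrees (r : ℕ) (W : Subgroup (EucV r ≃ₗᵢ[ℝ] EucV r)) (d : Fin r → ℕ) : Prop :=
  (∀ i, 0 < d i) ∧
    ∀ n : ℕ, Module.finrank ℝ (invHomog r W n) =
      Nat.card {f : Fin r → ℕ // ∑ i, d i * f i = n}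

section main
variable {r : ℕ} (S : Finset (EucV r ≃ₗᵢ[ℝ] EucV r)) (α : (EucV r ≃ₗᵢ[ℝ] EucV r) → EucV r)

lemma MM_cont : Continuous (MMdelta S α) :=
  continuous_finset_prod _ fun s _ => Continuous.inner continuous_const continuous_id

lemma MM_hom (t : ℝ) (x : EucV r) : MMdelta S α (t • x) = t ^ S.card * MMdelta S α x := by
  have h : ∀ s ∈ S, ⟪α s, t • x⟫ = t * ⟪α s, x⟫ := fun s _ => real_inner_smul_right _ _ _
  rw [MMdelta, Finset.prod_congr rfl h, Finset.prod_mul_distrib, Finset.prod_const, MMdelta]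

lemma MM_ub (x : EucV r) : |MMdelta S α x| ≤ (∏ s ∈ S, ‖α s‖) * ‖x‖ ^ S.card := by
  rw [MMdelta, Finset.abs_prod]
  calc ∏ s ∈ S, |⟪α s, x⟫| ≤ ∏ s ∈ S, ‖α s‖ * ‖x‖ :=
        Finset.prod_le_prod (fun s _ => abs_nonneg _) (fun s _ => abs_real_inner_le_norm _ _)
    _ = (∏ s ∈ S, ‖α s‖) * ‖x‖ ^ S.card := by
        rw [Finset.prod_mul_distrib, Finset.prod_const]

lemma MM_exists_ne (hα0 : ∀ s ∈ S, α s ≠ 0) : ∃ x0 : EucV r, MMdelta S α x0 ≠ 0 := by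
  by_contra h
  push_neg at h
  have hsub : (Set.univ : Set (EucV r)) ⊆
      ⋃ s ∈ S, ((LinearMap.ker ((innerSL ℝ (α s) : EucV r →L[ℝ] ℝ) : EucV r →ₗ[ℝ] ℝ) : Submodule ℝ (EucV r)) : Set (EucV r)) := by
    intro x _
    obtain ⟨s, hs, hsx⟩ := Finset.prod_eq_zero_iff.1 (h x)
    exact Set.mem_biUnion hs hsx
  have hz : volume (⋃ s ∈ S, ((LinearMap.ker ((innerSL ℝ (α s) : EucV r →L[ℝ] ℝ) : EucV r →ₗ[ℝ] ℝ) :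
      Submodule ℝ (EucV r)) : Set (EucV r))) = 0 := by
    refine (measure_biUnion_null_iff S.countable_toSet).2 fun s hs => ?_
    refine Measure.addHaar_submodule _ _ fun htop => ?_
    have : α s ∈ LinearMap.ker ((innerSL ℝ (α s) : EucV r →L[ℝ] ℝ) : EucV r →ₗ[ℝ] ℝ) := htop ▸ Submodule.mem_top
    rw [LinearMap.mem_ker] at this
    exact hα0 s hs (by simpa using this)
  have hpos : (0 : ENNReal) < volume (Set.univ : Set (EucV r)) :=
    isOpen_univ.measure_pos volume Set.univ_nonempty
  exact absurd (le_antisymm (hz ▸ measure_mono hsub) (zero_le)) hpos.ne'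
end main

lemma aux_sup {p u : ℝ} (hp : 0 ≤ p) (hu : 0 ≤ u) :
    u ^ p * Real.exp (-u / 4) ≤ (4 * p) ^ p * Real.exp (-p) := by
  rcases eq_or_lt_of_le hp with hp0 | hp0
  · rw [← hp0]
    simp only [Real.rpow_zero, one_mul, mul_zero, neg_zero, Real.exp_zero]
    rw [Real.exp_le_one_iff]
    linarith [hu]
  rcases eq_or_lt_of_le hu with hu0 | hu0
  · rw [← hu0, Real.zero_rpow (ne_of_gt hp0), zero_mul]
    positivity
  have h1 : Real.log (u / (4 * p)) ≤ u / (4 * p) - 1 :=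
    Real.log_le_sub_one_of_pos (by positivity)
  rw [Real.log_div (ne_of_gt hu0) (by positivity)] at h1
  have h2 : Real.log u * p - u / 4 ≤ Real.log (4 * p) * p + (-p) := by
    have := mul_le_mul_of_nonneg_right h1 hp
    have hp' : u / (4 * p) * p = u / 4 := by field_simp
    nlinarith [this]
  calc u ^ p * Real.exp (-u / 4) = Real.exp (Real.log u * p + (-u / 4)) := by
        rw [Real.exp_add, Real.rpow_def_of_pos hu0]
    _ ≤ Real.exp (Real.log (4 * p) * p + (-p)) := by
        apply Real.exp_le_exp.2; linarith
    _ = (4 * p) ^ p * Real.exp (-p) := by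
        rw [Real.exp_add, Real.rpow_def_of_pos (by positivity)]

lemma gauss_int {r : ℕ} {b : ℝ} (hb : 0 < b) :
    Integrable (fun x : EucV r => Real.exp (-b * ‖x‖ ^ 2)) := by
  have h := GaussianFourier.integrable_cexp_neg_mul_sq_norm_add
    (V := EucV r) (b := (b : ℂ)) (by simpa using hb) 0 0
  have h2 := h.re
  refine h2.congr (Filter.EventuallyEq.of_eq ?_)
  ext x
  simp [← Complex.ofReal_pow, ← Complex.ofReal_mul, ← Complex.ofReal_neg, Complex.exp_ofReal_re]

section main2
variable {r : ℕ} (S : Finset (EucV r ≃ₗᵢ[ℝ] EucV r)) (α : (EucV r ≃ₗᵢ[ℝ] EucV r) → EucV r)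

lemma MM_integrand_cont {k : ℝ} (hk : 0 ≤ k) :
    Continuous (fun x : EucV r => Real.exp (-⟪x, x⟫ / 2) * |MMdelta S α x| ^ (2 * k)) := by
  apply Continuous.mul
  · exact Real.continuous_exp.comp
      (((Continuous.inner continuous_id continuous_id).neg).div_const 2)
  · exact Continuous.rpow_const (continuous_abs.comp (MM_cont S α))
      fun x => Or.inr (by positivity)

lemma MM_integrand_le (hC : 0 < ∏ s ∈ S, ‖α s‖) {k : ℝ} (hk : 0 ≤ k) (x : EucV r) :
    Real.exp (-⟪x, x⟫ / 2) * |MMdelta S α x| ^ (2 * k) ≤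
      ((∏ s ∈ S, ‖α s‖) ^ (2 * k) *
        ((4 * ((S.card : ℝ) * k)) ^ ((S.card : ℝ) * k) * Real.exp (-((S.card : ℝ) * k)))) *
        Real.exp (-(1 / 4) * ‖x‖ ^ 2) := by
  set C := ∏ s ∈ S, ‖α s‖ with hCdef
  set N := S.card with hNdef
  rw [real_inner_self_eq_norm_sq]
  have h1 : |MMdelta S α x| ^ (2 * k) ≤ C ^ (2 * k) * (‖x‖ ^ 2) ^ ((N : ℝ) * k) := by
    calc |MMdelta S α x| ^ (2 * k) ≤ (C * ‖x‖ ^ N) ^ (2 * k) :=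
          Real.rpow_le_rpow (abs_nonneg _) (MM_ub S α x) (by positivity)
      _ = C ^ (2 * k) * (‖x‖ ^ 2) ^ ((N : ℝ) * k) := by
          rw [Real.mul_rpow hC.le (by positivity)]
          congr 1
          rw [← Real.rpow_natCast ‖x‖ N, ← Real.rpow_natCast ‖x‖ 2,
            ← Real.rpow_mul (norm_nonneg x), ← Real.rpow_mul (norm_nonneg x)]
          congr 1
          push_cast
          ring
  have h2 : (‖x‖ ^ 2) ^ ((N : ℝ) * k) * Real.exp (-‖x‖ ^ 2 / 4) ≤
      (4 * ((N : ℝ) * k)) ^ ((N : ℝ) * k) * Real.exp (-((N : ℝ) * k)) :=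
    aux_sup (by positivity) (by positivity)
  have he : Real.exp (-‖x‖ ^ 2 / 2) = Real.exp (-‖x‖ ^ 2 / 4) * Real.exp (-(1 / 4) * ‖x‖ ^ 2) := by
    rw [← Real.exp_add]; ring_nf
  calc Real.exp (-‖x‖ ^ 2 / 2) * |MMdelta S α x| ^ (2 * k)
      ≤ Real.exp (-‖x‖ ^ 2 / 2) * (C ^ (2 * k) * (‖x‖ ^ 2) ^ ((N : ℝ) * k)) :=
        mul_le_mul_of_nonneg_left h1 (Real.exp_pos _).le
    _ = C ^ (2 * k) * ((‖x‖ ^ 2) ^ ((N : ℝ) * k) * Real.exp (-‖x‖ ^ 2 / 4)) *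
          Real.exp (-(1 / 4) * ‖x‖ ^ 2) := by rw [he]; ring
    _ ≤ C ^ (2 * k) * ((4 * ((N : ℝ) * k)) ^ ((N : ℝ) * k) * Real.exp (-((N : ℝ) * k))) *
          Real.exp (-(1 / 4) * ‖x‖ ^ 2) := by
        apply mul_le_mul_of_nonneg_right _ (Real.exp_pos _).le
        exact mul_le_mul_of_nonneg_left h2 (by positivity)
    _ = _ := by ring

lemma MM_integrable (hC : 0 < ∏ s ∈ S, ‖α s‖) {k : ℝ} (hk : 0 ≤ k) :
    Integrable (fun x : EucV r => Real.exp (-⟪x, x⟫ / 2) * |MMdelta S α x| ^ (2 * k)) := by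
  refine Integrable.mono' (g := fun x : EucV r =>
      ((∏ s ∈ S, ‖α s‖) ^ (2 * k) *
        ((4 * ((S.card : ℝ) * k)) ^ ((S.card : ℝ) * k) * Real.exp (-((S.card : ℝ) * k)))) *
        Real.exp (-(1 / 4) * ‖x‖ ^ 2))
    ((gauss_int (by norm_num : (0:ℝ) < 1/4)).const_mul _)
    (MM_integrand_cont S α hk).aestronglyMeasurable (Filter.Eventually.of_forall fun x => ?_)
  rw [Real.norm_eq_abs, abs_of_nonneg (by positivity)]
  exact MM_integrand_le S α hC hk x
end main2



set_option maxHeartbeats 1000000 in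
lemma MM_lower {r : ℕ} (S : Finset (EucV r ≃ₗᵢ[ℝ] EucV r)) (α : (EucV r ≃ₗᵢ[ℝ] EucV r) → EucV r)
    (hC : 0 < ∏ s ∈ S, ‖α s‖) {x0 : EucV r} {cc δ : ℝ} (hc : 0 < cc) (hδ : 0 < δ)
    (hlow : ∀ y ∈ Metric.closedBall x0 δ, cc ≤ |MMdelta S α y|)
    {k : ℝ} (hk : 1 ≤ k) :
    Real.exp (-(k * (‖x0‖ + δ)^2) / 2) * (cc * Real.sqrt k ^ S.card) ^ (2*k) *
        (volume (Metric.closedBall (0 : EucV r) δ)).toReal ≤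
      ∫ x : EucV r, Real.exp (-⟪x, x⟫ / 2) * |MMdelta S α x| ^ (2 * k) := by
  have hk0 : (0:ℝ) ≤ k := by linarith
  have ht1 : 1 ≤ Real.sqrt k := Real.one_le_sqrt.2 hk
  have ht0 : 0 < Real.sqrt k := by linarith
  have htsq : Real.sqrt k ^ 2 = k := Real.sq_sqrt hk0
  have hmpos : 0 < Real.exp (-(k * (‖x0‖ + δ)^2) / 2) * (cc * Real.sqrt k ^ S.card) ^ (2*k) := by
    positivity
  have hpt : ∀ x ∈ Metric.closedBall (Real.sqrt k • x0) (Real.sqrt k * δ),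
      Real.exp (-(k * (‖x0‖ + δ)^2) / 2) * (cc * Real.sqrt k ^ S.card) ^ (2*k) ≤
        Real.exp (-⟪x, x⟫ / 2) * |MMdelta S α x| ^ (2 * k) := by
    intro x hx
    rw [Metric.mem_closedBall] at hx
    have hyb : (Real.sqrt k)⁻¹ • x ∈ Metric.closedBall x0 δ := by
      rw [Metric.mem_closedBall]
      have heq : dist ((Real.sqrt k)⁻¹ • x) x0 = (Real.sqrt k)⁻¹ * dist x (Real.sqrt k • x0) := by
        rw [dist_eq_norm, dist_eq_norm]
        have hsub : (Real.sqrt k)⁻¹ • x - x0 = (Real.sqrt k)⁻¹ • (x - Real.sqrt k • x0) := by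
          rw [smul_sub, smul_smul, inv_mul_cancel₀ ht0.ne', one_smul]
        rw [hsub, norm_smul, Real.norm_eq_abs, abs_of_pos (by positivity)]
      rw [heq]
      calc (Real.sqrt k)⁻¹ * dist x (Real.sqrt k • x0) ≤ (Real.sqrt k)⁻¹ * (Real.sqrt k * δ) :=
            mul_le_mul_of_nonneg_left hx (by positivity)
        _ = δ := by field_simp
    have hΔx : cc * Real.sqrt k ^ S.card ≤ |MMdelta S α x| := by
      have hxe : MMdelta S α x = Real.sqrt k ^ S.card * MMdelta S α ((Real.sqrt k)⁻¹ • x) := by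
        conv_lhs => rw [← smul_inv_smul₀ ht0.ne' x]
        exact MM_hom S α (Real.sqrt k) ((Real.sqrt k)⁻¹ • x)
      calc cc * Real.sqrt k ^ S.card ≤ |MMdelta S α ((Real.sqrt k)⁻¹ • x)| * Real.sqrt k ^ S.card :=
            mul_le_mul_of_nonneg_right (hlow _ hyb) (by positivity)
        _ = |MMdelta S α x| := by
            rw [hxe, abs_mul, abs_of_nonneg (by positivity : (0:ℝ) ≤ Real.sqrt k ^ S.card)]
            ring
    have hxn : ‖x‖ ≤ Real.sqrt k * (‖x0‖ + δ) := by
      have h1 := dist_triangle x (Real.sqrt k • x0) (0 : EucV r)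
      rw [dist_zero_right, dist_zero_right, norm_smul, Real.norm_eq_abs, abs_of_pos ht0] at h1
      nlinarith
    have hexp : Real.exp (-(k * (‖x0‖ + δ)^2) / 2) ≤ Real.exp (-⟪x, x⟫ / 2) := by
      rw [real_inner_self_eq_norm_sq]
      apply Real.exp_le_exp.2
      have h5 : ‖x‖^2 ≤ (Real.sqrt k * (‖x0‖ + δ))^2 := by nlinarith [norm_nonneg x]
      have h3 : (Real.sqrt k * (‖x0‖ + δ))^2 = k * (‖x0‖ + δ)^2 := by rw [mul_pow, htsq]
      rw [h3] at h5
      linarith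
    have hrpow : (cc * Real.sqrt k ^ S.card) ^ (2*k) ≤ |MMdelta S α x| ^ (2*k) :=
      Real.rpow_le_rpow (by positivity) hΔx (by linarith)
    exact mul_le_mul hexp hrpow (by positivity) (Real.exp_pos _).le
  have hvol : (volume (Metric.closedBall (0 : EucV r) δ)).toReal ≤
      (volume (Metric.closedBall (Real.sqrt k • x0) (Real.sqrt k * δ))).toReal := by
    rw [Measure.addHaar_closedBall_center (volume : Measure (EucV r)) (Real.sqrt k • x0)]
    refine (ENNReal.toReal_le_toReal measure_closedBall_lt_top.ne
      measure_closedBall_lt_top.ne).2 ?_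
    exact measure_mono (Metric.closedBall_subset_closedBall (by nlinarith))
  calc Real.exp (-(k * (‖x0‖ + δ)^2) / 2) * (cc * Real.sqrt k ^ S.card) ^ (2*k) *
        (volume (Metric.closedBall (0 : EucV r) δ)).toReal
      ≤ Real.exp (-(k * (‖x0‖ + δ)^2) / 2) * (cc * Real.sqrt k ^ S.card) ^ (2*k) *
        (volume (Metric.closedBall (Real.sqrt k • x0) (Real.sqrt k * δ))).toReal :=
        mul_le_mul_of_nonneg_left hvol hmpos.le
    _ ≤ ∫ x in Metric.closedBall (Real.sqrt k • x0) (Real.sqrt k * δ),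
          Real.exp (-⟪x, x⟫ / 2) * |MMdelta S α x| ^ (2 * k) :=
        setIntegral_ge_of_const_le_real measurableSet_closedBall measure_closedBall_lt_top.ne
          hpt ((MM_integrable S α hC hk0).integrableOn)
    _ ≤ _ := setIntegral_le_integral (MM_integrable S α hC hk0)
          (Filter.Eventually.of_forall fun x => by positivity)

set_option maxHeartbeats 1000000 in
lemma log_squeeze (N : ℕ) (hN1 : (1:ℝ) ≤ (N:ℝ)) (c0 C cc M v G : ℝ)
    (hc0 : 0 < c0) (hC : 0 < C) (hcc : 0 < cc) (hv : 0 < v) (hG : 0 < G)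
    (F I : ℝ → ℝ) (hF : ∀ k, F k = c0 * I k)
    (hub : ∀ k, 0 ≤ k →
      I k ≤ C ^ (2*k) * ((4 * ((N:ℝ)*k)) ^ ((N:ℝ)*k) * Real.exp (-((N:ℝ)*k))) * G)
    (hlb : ∀ k, 1 ≤ k →
      Real.exp (-(k * M^2) / 2) * (cc * Real.sqrt k ^ N) ^ (2*k) * v ≤ I k) :
    Filter.Tendsto (fun k : ℝ => Real.log (F k) / (k * Real.log k)) Filter.atTop (nhds (N:ℝ)) := by
  obtain ⟨B1, hB1⟩ : ∃ b : ℝ, b = 2 * Real.log C + (N:ℝ) * Real.log (4 * (N:ℝ)) - (N:ℝ) := ⟨_, rfl⟩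
  obtain ⟨B2, hB2⟩ : ∃ b : ℝ, b = 2 * Real.log cc - M^2 / 2 := ⟨_, rfl⟩
  obtain ⟨A, hA⟩ : ∃ a : ℝ, a = |B1| + |B2| + |Real.log G| + |Real.log v| + 2 * |Real.log c0| +
    (N:ℝ) + 1 := ⟨_, rfl⟩
  have hApos : 0 < A := by rw [hA]; positivity
  have key : ∀ k : ℝ, 1 ≤ k →
      (N:ℝ) * k * Real.log k - A * k ≤ Real.log (F k) ∧
      Real.log (F k) ≤ (N:ℝ) * k * Real.log k + A * k := by
    intro k hk
    have hk0 : (0:ℝ) < k := by linarith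
    have hlbk := hlb k hk
    have hubk := hub k (by linarith)
    have hsqrtpos : 0 < Real.sqrt k := Real.sqrt_pos.2 hk0
    have hL : 0 < Real.exp (-(k * M^2) / 2) * (cc * Real.sqrt k ^ N) ^ (2*k) * v := by positivity
    have hIpos : 0 < I k := lt_of_lt_of_le hL hlbk
    have hMMF : Real.log (F k) = Real.log c0 + Real.log (I k) := by
      rw [hF k, Real.log_mul hc0.ne' hIpos.ne']
    have hNk : 0 < 4 * ((N:ℝ) * k) := by nlinarith
    constructor
    · rw [hMMF]
      have h1 : Real.log (Real.exp (-(k * M^2) / 2) * (cc * Real.sqrt k ^ N) ^ (2*k) * v)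
          ≤ Real.log (I k) := (Real.log_le_log_iff hL hIpos).2 hlbk
      have h2 : Real.log (Real.exp (-(k * M^2) / 2) * (cc * Real.sqrt k ^ N) ^ (2*k) * v)
          = (N:ℝ) * k * Real.log k + B2 * k + Real.log v := by
        rw [Real.log_mul (by positivity) hv.ne',
          Real.log_mul (Real.exp_pos _).ne' (by positivity),
          Real.log_exp, Real.log_rpow (by positivity),
          Real.log_mul hcc.ne' (by positivity),
          Real.log_pow, Real.log_sqrt hk0.le, hB2]
        ring
      rw [h2] at h1
      have h4 : -(|B2| * k) ≤ B2 * k := by nlinarith [neg_abs_le B2]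
      have h5 : -(|Real.log v| * k) ≤ Real.log v := by
        nlinarith [neg_abs_le (Real.log v), abs_nonneg (Real.log v)]
      have h6 : -(|Real.log c0| * k) ≤ Real.log c0 := by
        nlinarith [neg_abs_le (Real.log c0), abs_nonneg (Real.log c0)]
      have hArest : 0 ≤ (|B1| + |Real.log G| + |Real.log c0| + (N:ℝ) + 1) * k := by positivity
      rw [hA]
      nlinarith
    · rw [hMMF]
      have hrp : 0 < (4 * ((N:ℝ)*k)) ^ ((N:ℝ)*k) := Real.rpow_pos_of_pos hNk _
      have hUpos : 0 < C ^ (2*k) * ((4 * ((N:ℝ)*k)) ^ ((N:ℝ)*k) * Real.exp (-((N:ℝ)*k))) * G :=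
        mul_pos (mul_pos (Real.rpow_pos_of_pos hC _) (mul_pos hrp (Real.exp_pos _))) hG
      have h1 : Real.log (I k) ≤
          Real.log (C ^ (2*k) * ((4 * ((N:ℝ)*k)) ^ ((N:ℝ)*k) * Real.exp (-((N:ℝ)*k))) * G) :=
        (Real.log_le_log_iff hIpos hUpos).2 hubk
      have h2 : Real.log (C ^ (2*k) * ((4 * ((N:ℝ)*k)) ^ ((N:ℝ)*k) * Real.exp (-((N:ℝ)*k))) * G)
          = (N:ℝ) * k * Real.log k + B1 * k + Real.log G := by
        rw [Real.log_mul (mul_pos (Real.rpow_pos_of_pos hC _)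
            (mul_pos hrp (Real.exp_pos _))).ne' hG.ne',
          Real.log_mul (Real.rpow_pos_of_pos hC _).ne' (mul_pos hrp (Real.exp_pos _)).ne',
          Real.log_rpow hC, Real.log_mul hrp.ne' (Real.exp_pos _).ne',
          Real.log_rpow hNk, Real.log_exp,
          show (4:ℝ) * ((N:ℝ)*k) = (4*(N:ℝ))*k by ring,
          Real.log_mul (by positivity : ((4:ℝ)*(N:ℝ)) ≠ 0) hk0.ne', hB1]
        ring
      rw [h2] at h1
      have h4 : B1 * k ≤ |B1| * k := by nlinarith [le_abs_self B1]
      have h5 : Real.log G ≤ |Real.log G| * k := by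
        nlinarith [le_abs_self (Real.log G), abs_nonneg (Real.log G)]
      have h6 : Real.log c0 ≤ |Real.log c0| * k := by
        nlinarith [le_abs_self (Real.log c0), abs_nonneg (Real.log c0)]
      have hArest : 0 ≤ (|B2| + |Real.log v| + |Real.log c0| + (N:ℝ) + 1) * k := by positivity
      rw [hA]
      nlinarith
  have hAlim : Filter.Tendsto (fun k : ℝ => A / Real.log k) Filter.atTop (nhds 0) :=
    Filter.Tendsto.div_atTop tendsto_const_nhds Real.tendsto_log_atTop
  have hlo : Filter.Tendsto (fun k : ℝ => (N:ℝ) - A / Real.log k) Filter.atTop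
      (nhds ((N:ℝ) - 0)) := tendsto_const_nhds.sub hAlim
  rw [sub_zero] at hlo
  have hhi : Filter.Tendsto (fun k : ℝ => (N:ℝ) + A / Real.log k) Filter.atTop
      (nhds ((N:ℝ) + 0)) := tendsto_const_nhds.add hAlim
  rw [add_zero] at hhi
  refine tendsto_of_tendsto_of_tendsto_of_le_of_le' hlo hhi ?_ ?_
  · filter_upwards [Filter.eventually_ge_atTop (2:ℝ)] with k hk2
    have hk1 : (1:ℝ) ≤ k := by linarith
    have hk0 : (0:ℝ) < k := by linarith
    have hlogk : 0 < Real.log k := Real.log_pos (by linarith)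
    have h := (key k hk1).1
    have heq : ((N:ℝ)*k*Real.log k - A*k)/(k*Real.log k) = (N:ℝ) - A/Real.log k := by
      field_simp
    rw [← heq]
    exact (div_le_div_iff_of_pos_right (by positivity)).2 h
  · filter_upwards [Filter.eventually_ge_atTop (2:ℝ)] with k hk2
    have hk1 : (1:ℝ) ≤ k := by linarith
    have hk0 : (0:ℝ) < k := by linarith
    have hlogk : 0 < Real.log k := Real.log_pos (by linarith)
    have h := (key k hk1).2
    have heq : ((N:ℝ)*k*Real.log k + A*k)/(k*Real.log k) = (N:ℝ) + A/Real.log k := by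
      field_simp
    rw [← heq]
    exact (div_le_div_iff_of_pos_right (by positivity)).2 h

/-- As `k → +∞`, `log F(k) / (k log k) → |S|`. -/
theorem macdonald_mehta_asymptotics
    (r : ℕ) (hr : 1 ≤ r)
    (W : Subgroup (EucV r ≃ₗᵢ[ℝ] EucV r)) (hWfin : Finite W)
    (S : Finset (EucV r ≃ₗᵢ[ℝ] EucV r))
    (hS : ∀ w, w ∈ S ↔ w ∈ W ∧ IsReflection w)
    (hgen : Subgroup.closure (S : Set (EucV r ≃ₗᵢ[ℝ] EucV r)) = W)
    (α : (EucV r ≃ₗᵢ[ℝ] EucV r) → EucV r)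
    (hα : ∀ s ∈ S, ⟪α s, α s⟫ = 2 ∧ ∀ v : EucV r, s v = v - ⟪α s, v⟫ • α s) :
    Filter.Tendsto (fun k : ℝ => Real.log (MMF r S α k) / (k * Real.log k))
      Filter.atTop (nhds (S.card : ℝ)) := by
  rcases eq_or_ne S ∅ with hSe | hSne
  · subst hSe
    have hconst : ∀ k : ℝ, MMF r ∅ α k = MMF r ∅ α 1 := by
      intro k
      simp [MMF, MMdelta]
    have h0 : Filter.Tendsto (fun k : ℝ => Real.log (MMF r ∅ α 1) / (k * Real.log k))
        Filter.atTop (nhds 0) :=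
      Filter.Tendsto.div_atTop tendsto_const_nhds
        (Filter.tendsto_id.atTop_mul_atTop₀ Real.tendsto_log_atTop)
    simpa [hconst] using h0
  have hα0 : ∀ s ∈ S, α s ≠ 0 := by
    intro s hs h0
    have h2 := (hα s hs).1
    rw [h0] at h2
    simp at h2
  have hN1 : 1 ≤ S.card := Finset.card_pos.2 (Finset.nonempty_of_ne_empty hSne)
  have hN1' : (1:ℝ) ≤ (S.card:ℝ) := by exact_mod_cast hN1
  have hC : 0 < ∏ s ∈ S, ‖α s‖ := Finset.prod_pos fun s hs => norm_pos_iff.2 (hα0 s hs)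
  have hc0 : 0 < (2 * Real.pi) ^ (-(r:ℝ)/2) := Real.rpow_pos_of_pos (by positivity) _
  have hG : 0 < (4 * Real.pi) ^ ((r:ℝ)/2) := Real.rpow_pos_of_pos (by positivity) _
  have hGint : (∫ x : EucV r, Real.exp (-(1/4) * ‖x‖^2)) = (4 * Real.pi) ^ ((r:ℝ)/2) := by
    rw [GaussianFourier.integral_rexp_neg_mul_sq_norm (by norm_num : (0:ℝ) < 1/4),
      finrank_euclideanSpace_fin]
    congr 1
    rw [div_eq_iff (by norm_num : (1:ℝ)/4 ≠ 0)]
    ring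
  obtain ⟨x0, hx0⟩ := MM_exists_ne S α hα0
  have hcpos : 0 < |MMdelta S α x0| / 2 := by
    have := abs_pos.2 hx0; linarith
  obtain ⟨δ', hδ', hball⟩ := Metric.continuousAt_iff.1 (MM_cont S α).continuousAt
    (|MMdelta S α x0| / 2) hcpos
  have hδ : 0 < δ' / 2 := by linarith
  have hlow : ∀ y ∈ Metric.closedBall x0 (δ' / 2),
      |MMdelta S α x0| / 2 ≤ |MMdelta S α y| := by
    intro y hy
    have h1 : dist (MMdelta S α y) (MMdelta S α x0) < |MMdelta S α x0| / 2 :=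
      hball (lt_of_le_of_lt (Metric.mem_closedBall.1 hy) (by linarith))
    rw [Real.dist_eq] at h1
    have h2 := abs_sub_abs_le_abs_sub (MMdelta S α x0) (MMdelta S α y)
    rw [abs_sub_comm (MMdelta S α x0)] at h2
    linarith
  have hv : 0 < (volume (Metric.closedBall (0 : EucV r) (δ' / 2))).toReal :=
    ENNReal.toReal_pos (Metric.measure_closedBall_pos _ _ hδ).ne' measure_closedBall_lt_top.ne
  exact log_squeeze S.card hN1' ((2 * Real.pi) ^ (-(r:ℝ)/2)) (∏ s ∈ S, ‖α s‖)
    (|MMdelta S α x0| / 2) (‖x0‖ + δ' / 2)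
    ((volume (Metric.closedBall (0 : EucV r) (δ' / 2))).toReal) ((4 * Real.pi) ^ ((r:ℝ)/2))
    hc0 hC hcpos hv hG (MMF r S α)
    (fun k => ∫ x : EucV r, Real.exp (-⟪x, x⟫ / 2) * |MMdelta S α x| ^ (2 * k))
    (fun k => rfl)
    (fun k hk => by
      have h1 := integral_mono (MM_integrable S α hC hk)
        ((gauss_int (by norm_num : (0:ℝ) < 1/4)).const_mul _)
        (MM_integrand_le S α hC hk)
      rw [integral_const_mul, hGint] at h1
      exact h1)
    (fun k hk => MM_lower S α hC hcpos hδ hlow hk)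
end
end
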